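/- Let (Ω, μ) be a finite measure space, (ρ_n) nonnegative measurable functions, and γ_n → ∞ with ∫_Ω ρ_n^{γ_n} dμ ≤ c·γ_n for all n. Define φ_n = (ρ_n − 1)_+ = max(ρ_n − 1, 0). Then for every p > 1, ∫_Ω φ_n^p dμ → 0 as n → ∞; more precisely, for large n, ∫_Ω φ_n^p dμ ≤ C/(c_p · γ_n^{p−1}) for constants C, c_p depending only on c, p, μ(Ω). -/

import Mathlib

open MeasureTheory Filter

private lemma aux_pt {p g a : ℝ} (hp : 1 < p) (ha : 0 ≤ a) (hg : p ≤ g) :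
    (max (a - 1) 0) ^ p ≤ (p / g) ^ p * (a ^ g + 1) := by
  have hp0 : (0:ℝ) < p := lt_trans one_pos hp
  have hg0 : (0:ℝ) < g := lt_of_lt_of_le hp0 hg
  set f := max (a - 1) 0 with hf_def
  have hf : 0 ≤ f := le_max_right _ _
  have hgp : 1 ≤ g / p := (one_le_div hp0).mpr hg
  have b1 : 1 + (g / p) * f ≤ (1 + f) ^ (g / p) :=
    one_add_mul_self_le_rpow_one_add (by linarith) hgp
  have b2 : (g / p) * f ≤ (1 + f) ^ (g / p) := le_trans (by linarith) b1
  have b3 : ((g / p) * f) ^ p ≤ ((1 + f) ^ (g / p)) ^ p :=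
    Real.rpow_le_rpow (by positivity) b2 hp0.le
  have b4 : ((1 + f) ^ (g / p)) ^ p = (1 + f) ^ g := by
    rw [← Real.rpow_mul (by positivity), div_mul_cancel₀ _ hp0.ne']
  have b5 : (1 + f) ^ g ≤ a ^ g + 1 := by
    rcases le_or_gt 1 a with h | h
    · have hfa : 1 + f = a := by
        rw [hf_def, max_eq_left (by linarith)]; ring
      rw [hfa]; linarith
    · have hfz : f = 0 := max_eq_right (by linarith)
      rw [hfz]
      have : ((1:ℝ) + 0) ^ g = 1 := by norm_num
      rw [this]
      have : (0:ℝ) ≤ a ^ g := Real.rpow_nonneg ha g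
      linarith
  have b6 : (g / p) ^ p * f ^ p = ((g / p) * f) ^ p :=
    (Real.mul_rpow (by positivity) hf).symm
  have hpg : (p / g) ^ p * (g / p) ^ p = 1 := by
    rw [← Real.mul_rpow (by positivity) (by positivity)]
    rw [show p / g * (g / p) = 1 by field_simp]
    exact Real.one_rpow p
  calc f ^ p = (p / g) ^ p * ((g / p) ^ p * f ^ p) := by
        rw [← mul_assoc, hpg, one_mul]
    _ = (p / g) ^ p * ((g / p) * f) ^ p := by rw [b6]
    _ ≤ (p / g) ^ p * (a ^ g + 1) :=
        mul_le_mul_of_nonneg_left (le_trans b3 (b4 ▸ b5)) (by positivity)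

private lemma aux_real {p g M c : ℝ} (hp : 1 < p) (hc : 0 < c) (hM : 0 ≤ M)
    (h1 : p ≤ g) (h2 : M ≤ g) (h3 : 1 ≤ g) :
    (p / g) ^ p * (c * g + M) ≤ (p ^ p * (c + 1)) / (1 * g ^ (p - 1)) := by
  have hp0 : (0:ℝ) < p := lt_trans one_pos hp
  have hg0 : (0:ℝ) < g := lt_of_lt_of_le one_pos h3
  rw [Real.div_rpow hp0.le hg0.le, one_mul]
  have hkey : g ^ (p - 1) * g = g ^ p := by
    have := Real.rpow_add hg0 (p - 1) 1
    rw [show p - 1 + 1 = p by ring, Real.rpow_one] at this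
    linarith
  have hstep : c * g + M ≤ (c + 1) * g := by nlinarith
  calc p ^ p / g ^ p * (c * g + M) ≤ p ^ p / g ^ p * ((c + 1) * g) := by
        apply mul_le_mul_of_nonneg_left hstep (by positivity)
    _ = p ^ p * (c + 1) / g ^ (p - 1) := by
        rw [← hkey]
        have hgp1 : (0:ℝ) < g ^ (p - 1) := Real.rpow_pos_of_pos hg0 _
        field_simp
  
theorem stmt_4 {Ω : Type*} [MeasurableSpace Ω] (μ : Measure Ω) [IsFiniteMeasure μ]
    (ρ : ℕ → Ω → ℝ) (γ : ℕ → ℝ) (c : ℝ) (hc : 0 < c)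
    (hmeas : ∀ n, Measurable (ρ n)) (hnn : ∀ n x, 0 ≤ ρ n x)
    (hγ : Tendsto γ atTop atTop)
    (hbd : ∀ n, ∫⁻ x, ENNReal.ofReal (ρ n x ^ γ n) ∂μ ≤ ENNReal.ofReal (c * γ n))
    (φ : ℕ → Ω → ℝ) (hφ : ∀ n x, φ n x = max (ρ n x - 1) 0)
    (p : ℝ) (hp : 1 < p) :
    Tendsto (fun n => ∫⁻ x, ENNReal.ofReal (φ n x ^ p) ∂μ) atTop (nhds 0) ∧
      ∃ C cp : ℝ, 0 < C ∧ 0 < cp ∧ ∀ᶠ n in atTop,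
        ∫⁻ x, ENNReal.ofReal (φ n x ^ p) ∂μ ≤ ENNReal.ofReal (C / (cp * γ n ^ (p - 1))) := by
  have hp0 : (0:ℝ) < p := lt_trans one_pos hp
  set M := (μ Set.univ).toReal with hMdef
  have hM0 : 0 ≤ M := ENNReal.toReal_nonneg
  have hC : 0 < p ^ p * (c + 1) := by positivity
  have key : ∀ᶠ n in atTop, ∫⁻ x, ENNReal.ofReal (φ n x ^ p) ∂μ ≤
      ENNReal.ofReal ((p ^ p * (c + 1)) / (1 * γ n ^ (p - 1))) := by
    filter_upwards [hγ.eventually_ge_atTop (max p (max M 1))] with n hn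
    have h1 : p ≤ γ n := le_trans (le_max_left _ _) hn
    have h2 : M ≤ γ n := le_trans (le_trans (le_max_left _ _) (le_max_right _ _)) hn
    have h3 : (1:ℝ) ≤ γ n := le_trans (le_trans (le_max_right _ _) (le_max_right _ _)) hn
    have hγ0 : (0:ℝ) < γ n := lt_of_lt_of_le one_pos h3
    have step1 : ∀ x, ENNReal.ofReal (φ n x ^ p) ≤
        ENNReal.ofReal ((p / γ n) ^ p) * (1 + ENNReal.ofReal (ρ n x ^ γ n)) := by
      intro x
      have hpt := aux_pt hp (hnn n x) h1
      calc ENNReal.ofReal (φ n x ^ p)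
          ≤ ENNReal.ofReal ((p / γ n) ^ p * (ρ n x ^ γ n + 1)) := by
            apply ENNReal.ofReal_le_ofReal; rw [hφ]; exact hpt
        _ = ENNReal.ofReal ((p / γ n) ^ p) * (1 + ENNReal.ofReal (ρ n x ^ γ n)) := by
            rw [ENNReal.ofReal_mul (by positivity),
              ENNReal.ofReal_add (Real.rpow_nonneg (hnn n x) _) zero_le_one,
              ENNReal.ofReal_one, add_comm]
    calc ∫⁻ x, ENNReal.ofReal (φ n x ^ p) ∂μ
        ≤ ∫⁻ x, ENNReal.ofReal ((p / γ n) ^ p) * (1 + ENNReal.ofReal (ρ n x ^ γ n)) ∂μ :=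
          lintegral_mono step1
      _ = ENNReal.ofReal ((p / γ n) ^ p) *
          ∫⁻ x, (1 + ENNReal.ofReal (ρ n x ^ γ n)) ∂μ :=
          lintegral_const_mul' _ _ ENNReal.ofReal_ne_top
      _ = ENNReal.ofReal ((p / γ n) ^ p) *
          (μ Set.univ + ∫⁻ x, ENNReal.ofReal (ρ n x ^ γ n) ∂μ) := by
          rw [lintegral_add_left measurable_const, lintegral_one]
      _ ≤ ENNReal.ofReal ((p / γ n) ^ p) * (ENNReal.ofReal M + ENNReal.ofReal (c * γ n)) := by
          gcongr
          · rw [hMdef, ENNReal.ofReal_toReal (measure_ne_top μ _)]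
          · exact hbd n
      _ = ENNReal.ofReal ((p / γ n) ^ p * (c * γ n + M)) := by
          rw [← ENNReal.ofReal_add hM0 (by positivity), ← ENNReal.ofReal_mul (by positivity),
            add_comm (M) _]
      _ ≤ ENNReal.ofReal ((p ^ p * (c + 1)) / (1 * γ n ^ (p - 1))) :=
          ENNReal.ofReal_le_ofReal (aux_real hp hc hM0 h1 h2 h3)
  constructor
  · have h0 : Tendsto (fun n => (p ^ p * (c + 1)) / (1 * γ n ^ (p - 1))) atTop (nhds 0) := by
      simp only [one_mul]
      exact Tendsto.div_atTop tendsto_const_nhds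
        ((tendsto_rpow_atTop (by linarith)).comp hγ)
    have h0' : Tendsto (fun n => ENNReal.ofReal ((p ^ p * (c + 1)) / (1 * γ n ^ (p - 1))))
        atTop (nhds 0) := by
      rw [← ENNReal.ofReal_zero]
      exact (ENNReal.continuous_ofReal.tendsto 0).comp h0
    exact tendsto_of_tendsto_of_tendsto_of_le_of_le' tendsto_const_nhds h0'
      (Eventually.of_forall fun n => zero_le) key
  · exact ⟨_, 1, hC, one_pos, key⟩
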